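/- Let A, B ∈ ℝ[t, t⁻¹] be palindromic and coprime, with P̃, Q̃ palindromic satisfying P̃A + Q̃B = 1. Define γ_max(z) = P̃(z)/B(z) if B(z) > 0 and +∞ otherwise, and γ_min(z) = −Q̃(z)/A(z) if A(z) > 0 and −∞ otherwise, for z ∈ S¹. If for every z ∈ S¹ at least one of A(z), B(z) is positive, then γ_min(z) < γ_max(z) for all z ∈ S¹. -/

import Mathlib

open LaurentPolynomial

noncomputable def lEval (p : LaurentPolynomial ℝ) (z : ℂ) : ℂ :=
  Finsupp.sum (AddMonoidAlgebra.coeff p) fun n a => (a : ℂ) * z ^ n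

def Palindromic (p : LaurentPolynomial ℝ) : Prop := invert p = p

/-- `γ_max(z) = P̃(z)/B(z)` if `B(z) > 0`, and `+∞` otherwise. -/
noncomputable def gammaMax (Pt B : LaurentPolynomial ℝ) (z : ℂ) : EReal :=
  if 0 < (lEval B z).re then ((((lEval Pt z).re / (lEval B z).re : ℝ) : EReal)) else ⊤

/-- `γ_min(z) = -Q̃(z)/A(z)` if `A(z) > 0`, and `-∞` otherwise. -/
noncomputable def gammaMin (Qt A : LaurentPolynomial ℝ) (z : ℂ) : EReal :=
  if 0 < (lEval A z).re then (((-(lEval Qt z).re / (lEval A z).re : ℝ) : EReal)) else ⊥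

noncomputable def zHom {z : ℂ} (hz : z ≠ 0) : Multiplicative ℤ →* ℂ where
  toFun n := z ^ (Multiplicative.toAdd n)
  map_one' := zpow_zero z
  map_mul' a b := zpow_add₀ hz _ _

lemma lEval_eq_lift {z : ℂ} (hz : z ≠ 0) (p : LaurentPolynomial ℝ) :
    lEval p z = AddMonoidAlgebra.lift ℝ ℂ ℤ (zHom hz) p := by
  rw [AddMonoidAlgebra.lift_apply]
  refine Finsupp.sum_congr fun n _ => ?_
  simp [zHom, Algebra.smul_def]

lemma lEval_mul {z : ℂ} (hz : z ≠ 0) (p q : LaurentPolynomial ℝ) :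
    lEval (p * q) z = lEval p z * lEval q z := by
  simp [lEval_eq_lift hz]

lemma lEval_add (z : ℂ) (p q : LaurentPolynomial ℝ) :
    lEval (p + q) z = lEval p z + lEval q z := by
  unfold lEval
  rw [AddMonoidAlgebra.coeff_add, Finsupp.sum_add_index] <;> intros <;> push_cast <;> ring

lemma lEval_one (z : ℂ) : lEval 1 z = 1 := by
  unfold lEval
  rw [show AddMonoidAlgebra.coeff (1 : LaurentPolynomial ℝ) = Finsupp.single 0 1 from rfl, Finsupp.sum_single_index] <;> simp

lemma invert_eq_equivMapDomain (p : LaurentPolynomial ℝ) :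
    (invert p : LaurentPolynomial ℝ).coeff = Finsupp.equivMapDomain (Equiv.neg ℤ) p.coeff := by
  ext n
  simp [Finsupp.equivMapDomain_apply]

lemma lEval_invert (p : LaurentPolynomial ℝ) (z : ℂ) :
    lEval (invert p) z = Finsupp.sum p.coeff fun n a => (a : ℂ) * z ^ (-n) := by
  rw [lEval, invert_eq_equivMapDomain, Finsupp.sum_equivMapDomain]
  rfl

lemma lEval_real {z : ℂ} (hz : ‖z‖ = 1) {p : LaurentPolynomial ℝ} (hp : Palindromic p) :
    (lEval p z).im = 0 := by
  have hz0 : z ≠ 0 := by intro h; simp [h] at hz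
  have hconj : (starRingEnd ℂ) (lEval p z) = lEval p z := by
    conv_rhs => rw [← hp, lEval_invert]
    rw [lEval, map_finsuppSum]
    refine Finsupp.sum_congr fun n _ => ?_
    rw [map_mul, map_zpow₀, ← Complex.inv_eq_conj hz, inv_zpow, ← zpow_neg]
    simp
  exact Complex.conj_eq_iff_im.mp hconj

/-- If `P̃A + Q̃B = 1` with everything palindromic, `A`, `B` coprime, and at each
point of the unit circle at least one of `A(z)`, `B(z)` is positive, then
`γ_min(z) < γ_max(z)` everywhere on the unit circle. -/
theorem gammaMin_lt_gammaMax
    (A B Pt Qt : LaurentPolynomial ℝ)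
    (hA : Palindromic A) (hB : Palindromic B)
    (hPt : Palindromic Pt) (hQt : Palindromic Qt)
    (hcop : IsCoprime A B)
    (hbez : Pt * A + Qt * B = 1)
    (hpos : ∀ z : ℂ, ‖z‖ = 1 → 0 < (lEval A z).re ∨ 0 < (lEval B z).re) :
    ∀ z : ℂ, ‖z‖ = 1 → gammaMin Qt A z < gammaMax Pt B z := by
  intro z hz
  have hz0 : z ≠ 0 := by intro h; simp [h] at hz
  set a := (lEval A z).re with ha
  set b := (lEval B z).re with hb
  set p := (lEval Pt z).re with hp
  set q := (lEval Qt z).re with hq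
  have hkey : p * a + q * b = 1 := by
    have h1 : lEval Pt z * lEval A z + lEval Qt z * lEval B z = 1 := by
      rw [← lEval_mul hz0, ← lEval_mul hz0, ← lEval_add, hbez, lEval_one]
    have := congrArg Complex.re h1
    simp [Complex.add_re, Complex.mul_re, lEval_real hz hA, lEval_real hz hB,
      lEval_real hz hPt, lEval_real hz hQt] at this
    linarith [this]
  rcases hpos z hz with hA' | hB'
  · rw [gammaMin, if_pos hA']
    by_cases hB' : 0 < b
    · rw [gammaMax, if_pos hB']
      rw [EReal.coe_lt_coe_iff]
      rw [div_lt_div_iff₀ hA' hB']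
      nlinarith
    · rw [gammaMax, if_neg hB']
      exact EReal.coe_lt_top _
  · rw [gammaMax, if_pos hB']
    rw [gammaMin]
    split
    · rw [EReal.coe_lt_coe_iff, div_lt_div_iff₀ ‹_› hB']
      nlinarith
    · exact EReal.bot_lt_coe _
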